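/- Let β, x₁,…,x_d, b₁, b₂,… be independent indeterminates and work in the ring of formal power series over ℤ in these variables (where each 1+βx_i is invertible). Let a = (a₁,…,a_d) ∈ ℤ^d with a_i + d - i ≥ 0 for every i. With H' := ( Σ_{s≥0} C(i-j, s) β^s G^{(a_i+d-i)}_{a_i+j-i+s} )_{1≤i,j≤d} and M̄ := ( (-1)^{d-i} ē_{d-i}^{(j)} )_{1≤i,j≤d}, where ē_p^{(j)} is the p-th elementary symmetric polynomial in the d-1 quantities x_i/(1+βx_i) for i ≠ j and C(n,s) is the generalized binomial coefficient given by (1+x)^n = Σ_{s≥0} C(n,s)x^s, one has det H' · det M̄ = (∏_{j=1}^{d} (1+βx_j)^{1-d}) · det( [x_j|b]^{a_i+d-i} (1+βx_j)^{i-1} )_{1≤i,j≤d}. -/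

import Mathlib

open scoped BigOperators

namespace GrothDet

/-- Index type for the indeterminates: `β`, `x₁,…,x_d`, `b₁,b₂,…`. -/
abbrev Idx (d : ℕ) := Unit ⊕ Fin d ⊕ ℕ

/-- The ambient ring: formal power series over `ℤ` in `β`, the `xᵢ` and the `bⱼ`. -/
abbrev R (d : ℕ) := MvPowerSeries (Idx d) ℤ

noncomputable def β (d : ℕ) : R d := MvPowerSeries.X (Sum.inl ())
noncomputable def x (d : ℕ) (i : Fin d) : R d := MvPowerSeries.X (Sum.inr (Sum.inl i))
noncomputable def b (d : ℕ) (ℓ : ℕ) : R d := MvPowerSeries.X (Sum.inr (Sum.inr ℓ))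

/-- `x ⊕ y := x + y + βxy`. -/
noncomputable def oplus (d : ℕ) (u v : R d) : R d := u + v + β d * u * v

/-- `[y|b]^k := (y ⊕ b₁)⋯(y ⊕ b_k)`. -/
noncomputable def fb (d : ℕ) (y : R d) (k : ℕ) : R d :=
  ∏ ℓ ∈ Finset.range k, oplus d y (b d ℓ)

/-- The multiplicative inverse of `1 + β * x j` (a unit since its constant term is `1`). -/
noncomputable def invOneAdd (d : ℕ) (j : Fin d) : R d :=
  MvPowerSeries.invOfUnit (1 + β d * x d j) 1

/-- `F^{(k)}(u) = ∏ᵢ (1+βxᵢ)/(1-xᵢu) · ∏_{ℓ=1}^k (1+(u+β)b_ℓ)` as a power series in `u`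
over `R d`; here `(1-xᵢu)⁻¹ = ∑_n xᵢⁿ uⁿ`. -/
noncomputable def F (d : ℕ) (k : ℕ) : PowerSeries (R d) :=
  (∏ i : Fin d,
      PowerSeries.C (1 + β d * x d i) * PowerSeries.mk fun n => x d i ^ n) *
    ∏ ℓ ∈ Finset.range k,
      (1 + (PowerSeries.X + PowerSeries.C (β d)) * PowerSeries.C (b d ℓ))

/-- `[u^t] F^{(k)}(u)`, extended by `0` in negative degrees `t`. -/
noncomputable def Fcoeff (d : ℕ) (k : ℕ) (t : ℤ) : R d :=
  if 0 ≤ t then PowerSeries.coeff t.toNat (F d k) else 0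

/-- The sum `∑_{s≥0} f s` of a family of power series such that `β^s ∣ f s`:
it is defined coefficientwise; on the coefficient of a monomial `n` only the
(finitely many) terms with `s ≤ n(β)` contribute, and the value is the limit of the
partial sums in the formal power series topology. -/
noncomputable def seriesSum (d : ℕ) (f : ℕ → R d) : R d :=
  (fun n => ∑ s ∈ Finset.range (n (Sum.inl ()) + 1), MvPowerSeries.coeff n (f s) :
    (Idx d →₀ ℕ) → ℤ)

/-- `G^{(k)}_m = ∑_{s≥0} (-β)^s [u^{m+s}] F^{(k)}(u)`. -/
noncomputable def G (d : ℕ) (k : ℕ) (m : ℤ) : R d :=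
  seriesSum d fun s => (-β d) ^ s * Fcoeff d k (m + s)

/-- The `p`-th elementary symmetric function of the family `f` restricted to `S`. -/
noncomputable def esym (d : ℕ) (S : Finset (Fin d)) (p : ℕ) (f : Fin d → R d) : R d :=
  ∑ t ∈ S.powersetCard p, ∏ i ∈ t, f i

/-- `x_i/(1+βx_i) = -x̄_i`. -/
noncomputable def xbar (d : ℕ) (i : Fin d) : R d := x d i * invOneAdd d i

/-! ### Infrastructure for `seriesSum` -/

/-- vanishing property: the `s`-th term has coefficient 0 on monomials of β-degree < `s`. -/
def Van (d : ℕ) (f : ℕ → R d) : Prop :=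
  ∀ (s : ℕ) (n : Idx d →₀ ℕ), n (Sum.inl ()) < s → MvPowerSeries.coeff n (f s) = 0

theorem coeff_seriesSum (d : ℕ) (f : ℕ → R d) (n : Idx d →₀ ℕ) :
    MvPowerSeries.coeff n (seriesSum d f)
      = ∑ s ∈ Finset.range (n (Sum.inl ()) + 1), MvPowerSeries.coeff n (f s) := rfl

theorem coeff_seriesSum_of (d : ℕ) {f : ℕ → R d} (hf : Van d f) (n : Idx d →₀ ℕ)
    {N : ℕ} (hN : n (Sum.inl ()) < N) :
    MvPowerSeries.coeff n (seriesSum d f)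
      = ∑ s ∈ Finset.range N, MvPowerSeries.coeff n (f s) := by
  rw [coeff_seriesSum]
  apply Finset.sum_subset
  · exact Finset.range_subset_range.2 hN
  · intro s _ hs
    exact hf s n (by simpa using hs)

theorem van_beta_pow_mul (d : ℕ) (h : ℕ → R d) (c : ℕ → ℤ) :
    Van d (fun s => c s • (β d ^ s * h s)) := by
  intro s n hn
  rw [map_zsmul]
  have hdvd : (MvPowerSeries.X (Sum.inl ()) : R d) ^ s ∣ β d ^ s * h s := dvd_mul_right _ _
  rw [(MvPowerSeries.X_pow_dvd_iff.1 hdvd) n hn, smul_zero]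

theorem van_betax_pow (d : ℕ) (j : Fin d) (c : ℕ → ℤ) :
    Van d (fun s => c s • (β d * x d j) ^ s) := by
  have : ∀ s, c s • (β d * x d j) ^ s = c s • (β d ^ s * x d j ^ s) := by
    intro s; rw [mul_pow]
  simp only [this]
  exact van_beta_pow_mul d (fun s => x d j ^ s) c

theorem seriesSum_congr (d : ℕ) {f g : ℕ → R d} (h : ∀ s, f s = g s) :
    seriesSum d f = seriesSum d g := by
  have : f = g := funext h
  rw [this]

theorem seriesSum_eq_finsetSum (d : ℕ) {f : ℕ → R d} (hf : Van d f) (M : ℕ)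
    (hM : ∀ s, M ≤ s → f s = 0) :
    seriesSum d f = ∑ s ∈ Finset.range M, f s := by
  apply MvPowerSeries.ext; intro n
  rw [map_sum, coeff_seriesSum_of d hf n (N := max M (n (Sum.inl ()) + 1)) (by omega)]
  symm
  apply Finset.sum_subset
  · exact Finset.range_subset_range.2 (le_max_left _ _)
  · intro s hs hs'
    rw [hM s (by simpa using hs'), map_zero]

theorem seriesSum_finsetSum (d : ℕ) {A : Type*} (S : Finset A) (f : A → ℕ → R d) :
    seriesSum d (fun s => ∑ m ∈ S, f m s) = ∑ m ∈ S, seriesSum d (f m) := by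
  apply MvPowerSeries.ext; intro n
  rw [map_sum, coeff_seriesSum]
  simp_rw [map_sum, coeff_seriesSum]
  exact Finset.sum_comm

theorem seriesSum_add (d : ℕ) (f g : ℕ → R d) :
    seriesSum d (fun s => f s + g s) = seriesSum d f + seriesSum d g := by
  apply MvPowerSeries.ext; intro n
  rw [map_add, coeff_seriesSum, coeff_seriesSum, coeff_seriesSum, ← Finset.sum_add_distrib]
  simp

theorem mul_seriesSum (d : ℕ) (g : R d) {f : ℕ → R d} (hf : Van d f) :
    g * seriesSum d f = seriesSum d (fun s => g * f s) := by
  apply MvPowerSeries.ext; intro n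
  rw [MvPowerSeries.coeff_mul, coeff_seriesSum]
  have : ∀ p ∈ Finset.HasAntidiagonal.antidiagonal n,
      MvPowerSeries.coeff p.1 g * MvPowerSeries.coeff p.2 (seriesSum d f)
        = ∑ s ∈ Finset.range (n (Sum.inl ()) + 1),
            MvPowerSeries.coeff p.1 g * MvPowerSeries.coeff p.2 (f s) := by
    intro p hp
    rw [Finset.HasAntidiagonal.mem_antidiagonal] at hp
    have hle : p.2 (Sum.inl ()) ≤ n (Sum.inl ()) := by
      rw [← hp]; simp
    rw [coeff_seriesSum_of d hf p.2 (N := n (Sum.inl ()) + 1) (by omega), Finset.mul_sum]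
  rw [Finset.sum_congr rfl this, Finset.sum_comm]
  apply Finset.sum_congr rfl
  intro s _
  rw [MvPowerSeries.coeff_mul]

theorem seriesSum_shift (d : ℕ) {f : ℕ → R d} (h0 : f 0 = 0) (hf : Van d f) :
    seriesSum d f = seriesSum d (fun s => f (s + 1)) := by
  apply MvPowerSeries.ext; intro n
  rw [coeff_seriesSum, coeff_seriesSum, Finset.sum_range_succ' _ (n (Sum.inl ())), h0, map_zero,
    add_zero, Finset.sum_range_succ, hf _ n (by omega), add_zero]

theorem triangle_swap {A : Type*} [AddCommMonoid A] (M : ℕ) (g : ℕ → ℕ → A) :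
    ∑ s ∈ Finset.range (M + 1), ∑ r ∈ Finset.range (M - s + 1), g s r
      = ∑ t ∈ Finset.range (M + 1), ∑ s ∈ Finset.range (t + 1), g s (t - s) := by
  rw [Finset.sum_sigma', Finset.sum_sigma']
  apply Finset.sum_nbij' (fun p => ⟨p.1 + p.2, p.1⟩) (fun p => ⟨p.2, p.1 - p.2⟩)
  · intro p hp
    simp only [Finset.mem_sigma, Finset.mem_range] at hp ⊢
    omega
  · intro p hp
    simp only [Finset.mem_sigma, Finset.mem_range] at hp ⊢
    omega
  · intro p hp
    obtain ⟨a, c⟩ := p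
    simp only [Finset.mem_sigma, Finset.mem_range] at hp
    have h1 : a + c - a = c := by omega
    rw [h1]
  · intro p hp
    obtain ⟨a, c⟩ := p
    simp only [Finset.mem_sigma, Finset.mem_range] at hp
    have h1 : c + (a - c) = a := by omega
    rw [h1]
  · intro p hp
    simp

theorem coeff_beta_pow_mul (d : ℕ) (s : ℕ) (ψ : R d) (n : Idx d →₀ ℕ) :
    MvPowerSeries.coeff n (β d ^ s * ψ)
      = if s ≤ n (Sum.inl ()) then
          MvPowerSeries.coeff (n - Finsupp.single (Sum.inl ()) s) ψ else 0 := by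
  rw [β, MvPowerSeries.X_pow_eq, MvPowerSeries.coeff_monomial_mul]
  by_cases h : Finsupp.single (Sum.inl () : Idx d) s ≤ n
  · rw [if_pos h, if_pos (by simpa using Finsupp.single_le_iff.1 h), one_mul]
  · rw [if_neg h, if_neg (by
      intro hc
      exact h (Finsupp.single_le_iff.2 hc))]

theorem sub_single_apply (d : ℕ) (n : Idx d →₀ ℕ) (s : ℕ) :
    (n - Finsupp.single (Sum.inl () : Idx d) s) (Sum.inl ()) = n (Sum.inl ()) - s := by
  rw [Finsupp.tsub_apply, Finsupp.single_eq_same]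

theorem sub_single_sub_single (d : ℕ) (n : Idx d →₀ ℕ) (s r : ℕ) :
    n - Finsupp.single (Sum.inl () : Idx d) s - Finsupp.single (Sum.inl ()) r
      = n - Finsupp.single (Sum.inl ()) (s + r) := by
  rw [tsub_tsub, ← Finsupp.single_add]

theorem seriesSum_merge (d : ℕ) (c₁ c₂ : ℕ → ℤ) (φ : ℕ → R d) :
    seriesSum d (fun s =>
        c₁ s • (β d ^ s * seriesSum d (fun r => c₂ r • (β d ^ r * φ (s + r)))))
      = seriesSum d (fun t =>
          (∑ s ∈ Finset.range (t + 1), c₁ s * c₂ (t - s)) • (β d ^ t * φ t)) := by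
  apply MvPowerSeries.ext; intro n
  rw [coeff_seriesSum, coeff_seriesSum]
  set M := n (Sum.inl ()) with hM
  have key : ∀ s ∈ Finset.range (M + 1),
      MvPowerSeries.coeff n
          (c₁ s • (β d ^ s * seriesSum d (fun r => c₂ r • (β d ^ r * φ (s + r)))))
        = ∑ r ∈ Finset.range (M - s + 1),
            (c₁ s * c₂ r) •
              MvPowerSeries.coeff (n - Finsupp.single (Sum.inl ()) (s + r)) (φ (s + r)) := by
    intro s hs
    rw [Finset.mem_range] at hs
    rw [map_zsmul, coeff_beta_pow_mul, if_pos (by omega), coeff_seriesSum,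
      sub_single_apply, Finset.smul_sum]
    apply Finset.sum_congr rfl
    intro r hr
    rw [Finset.mem_range] at hr
    rw [map_zsmul, coeff_beta_pow_mul, if_pos (by rw [sub_single_apply]; omega),
      sub_single_sub_single, smul_smul]
  rw [Finset.sum_congr rfl key, triangle_swap]
  apply Finset.sum_congr rfl
  intro t ht
  rw [Finset.mem_range] at ht
  rw [map_zsmul, coeff_beta_pow_mul, if_pos (by omega), Finset.sum_smul]
  apply Finset.sum_congr rfl
  intro s hs
  rw [Finset.mem_range] at hs
  have h1 : s + (t - s) = t := by omega
  rw [h1]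

/-! ### binomial coefficient convolution identities -/

theorem conv_alt (w : ℤ) : ∀ t : ℕ,
    ∑ s ∈ Finset.range (t + 1), Ring.choose w s * (-1 : ℤ) ^ (t - s)
      = Ring.choose (w - 1) t := by
  intro t
  induction t with
  | zero => simp [Ring.choose_zero_right]
  | succ t ih =>
    rw [Finset.sum_range_succ]
    have h1 : ∀ s ∈ Finset.range (t + 1),
        Ring.choose w s * (-1 : ℤ) ^ (t + 1 - s)
          = -(Ring.choose w s * (-1 : ℤ) ^ (t - s)) := by
      intro s hs
      rw [Finset.mem_range] at hs
      have : t + 1 - s = (t - s) + 1 := by omega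
      rw [this, pow_succ]
      ring
    rw [Finset.sum_congr rfl h1, Finset.sum_neg_distrib, ih]
    have pas : Ring.choose ((w - 1) + 1) (t + 1)
        = Ring.choose (w - 1) t + Ring.choose (w - 1) (t + 1) :=
      Ring.choose_succ_succ (w - 1) t
    rw [sub_add_cancel] at pas
    rw [Nat.sub_self, pow_zero, mul_one, pas]
    ring

theorem conv_vand (w : ℤ) : ∀ (p : ℕ) (t : ℕ),
    ∑ s ∈ Finset.range (t + 1), (Nat.choose p s : ℤ) * Ring.choose w (t - s)
      = Ring.choose (w + p) t := by
  intro p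
  induction p with
  | zero =>
    intro t
    rw [Finset.sum_eq_single 0]
    · simp
    · intro s _ hs
      rw [Nat.choose_eq_zero_of_lt (by omega), Nat.cast_zero, zero_mul]
    · simp
  | succ p ih =>
    intro t
    cases t with
    | zero => simp [Ring.choose_zero_right]
    | succ t =>
      rw [Finset.sum_range_succ']
      simp only [Nat.choose_succ_succ, Nat.cast_add]
      have h2 : ∀ s ∈ Finset.range (t + 1),
          ((Nat.choose p s : ℤ) + (Nat.choose p (s + 1) : ℤ)) * Ring.choose w (t + 1 - (s + 1))
            = (Nat.choose p s : ℤ) * Ring.choose w (t - s)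
              + (Nat.choose p (s + 1) : ℤ) * Ring.choose w (t - s) := by
        intro s hs
        have : t + 1 - (s + 1) = t - s := by omega
        rw [this, add_mul]
      rw [Finset.sum_congr rfl h2, Finset.sum_add_distrib, ih t]
      have h3 : ∑ s ∈ Finset.range (t + 1), (Nat.choose p (s + 1) : ℤ) * Ring.choose w (t - s)
          = Ring.choose (w + p) (t + 1) - Ring.choose w (t + 1) := by
        have := ih (t + 1)
        rw [Finset.sum_range_succ'] at this
        simp only [Nat.choose_zero_right, Nat.cast_one, one_mul, Nat.sub_zero] at this
        have h4 : ∀ s ∈ Finset.range (t + 1),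
            (Nat.choose p (s + 1) : ℤ) * Ring.choose w (t + 1 - (s + 1))
              = (Nat.choose p (s + 1) : ℤ) * Ring.choose w (t - s) := by
          intro s hs
          have : t + 1 - (s + 1) = t - s := by omega
          rw [this]
        rw [Finset.sum_congr rfl h4] at this
        omega
      rw [h3]
      have pas : Ring.choose ((w + p) + 1) (t + 1)
          = Ring.choose (w + p) t + Ring.choose (w + p) (t + 1) :=
        Ring.choose_succ_succ (w + p) t
      push_cast
      rw [show w + ((p : ℤ) + 1) = (w + (p : ℤ)) + 1 by ring, pas]
      simp only [Nat.choose_zero_right, Nat.cast_one, one_mul]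
      ring

/-! ### power series facts -/

theorem constCoeff_one_add (d : ℕ) (i : Fin d) :
    MvPowerSeries.constantCoeff (1 + β d * x d i) = 1 := by
  simp [β, x]

theorem one_add_mul_invOneAdd (d : ℕ) (i : Fin d) :
    (1 + β d * x d i) * invOneAdd d i = 1 := by
  apply MvPowerSeries.mul_invOfUnit
  rw [constCoeff_one_add]; rfl

theorem xbar_mul_one_add (d : ℕ) (i : Fin d) :
    xbar d i * (1 + β d * x d i) = x d i := by
  rw [xbar, mul_assoc, mul_comm (invOneAdd d i), one_add_mul_invOneAdd, mul_one]

theorem geom_mul (A : Type*) [CommRing A] (c : A) :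
    (1 - PowerSeries.C c * PowerSeries.X) * (PowerSeries.mk fun n => c ^ n) = 1 := by
  apply PowerSeries.ext; intro n
  rw [sub_mul, one_mul, map_sub, mul_assoc]
  cases n with
  | zero => simp
  | succ n =>
    rw [PowerSeries.coeff_mk, PowerSeries.coeff_C_mul, mul_comm PowerSeries.X,
      PowerSeries.coeff_succ_mul_X, PowerSeries.coeff_mk, PowerSeries.coeff_one]
    simp [pow_succ, mul_comm]

theorem Qfactor_mul (d : ℕ) (i : Fin d) :
    (1 - (PowerSeries.X + PowerSeries.C (β d)) * PowerSeries.C (xbar d i)) *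
      (PowerSeries.C (1 + β d * x d i) * PowerSeries.mk fun n => x d i ^ n) = 1 := by
  have h1 : (1 - (PowerSeries.X + PowerSeries.C (β d)) * PowerSeries.C (xbar d i)) *
      PowerSeries.C (1 + β d * x d i)
        = 1 - PowerSeries.C (x d i) * PowerSeries.X := by
    rw [sub_mul, one_mul, mul_assoc, ← map_mul, xbar_mul_one_add, map_add, map_one, map_mul]
    ring
  rw [← mul_assoc, h1, geom_mul]

/-- the identity `QS * F = C(1+βx_j) * (geometric series in x_j) * P`. -/
theorem QS_mul_F (d : ℕ) (k : ℕ) (j : Fin d) :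
    (∏ i' ∈ Finset.univ \ {j},
        (1 - (PowerSeries.X + PowerSeries.C (β d)) * PowerSeries.C (xbar d i'))) *
      F d k
      = PowerSeries.C (1 + β d * x d j) * (PowerSeries.mk fun n => x d j ^ n) *
          ∏ ℓ ∈ Finset.range k,
            (1 + (PowerSeries.X + PowerSeries.C (β d)) * PowerSeries.C (b d ℓ)) := by
  rw [F, ← Finset.erase_eq]
  rw [← Finset.mul_prod_erase Finset.univ _ (Finset.mem_univ j)]
  rw [show ∀ (A B C P : PowerSeries (R d)), A * (B * C * P) = ((A * C) * B) * P by
    intros; ring]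
  rw [← Finset.prod_mul_distrib]
  have h1 : ∀ i' ∈ Finset.univ.erase j,
      (1 - (PowerSeries.X + PowerSeries.C (β d)) * PowerSeries.C (xbar d i')) *
          (PowerSeries.C (1 + β d * x d i') * PowerSeries.mk fun n => x d i' ^ n) = 1 :=
    fun i' _ => Qfactor_mul d i'
  rw [Finset.prod_congr rfl h1, Finset.prod_const_one, one_mul]

theorem coeff_mul_linfactor (d : ℕ) (φ : PowerSeries (R d)) (c : R d) (q : ℕ) :
    PowerSeries.coeff q
        (φ * (1 + (PowerSeries.X + PowerSeries.C (β d)) * PowerSeries.C c))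
      = PowerSeries.coeff q φ * (1 + β d * c)
        + (if q = 0 then 0 else PowerSeries.coeff (q - 1) φ * c) := by
  have expand : φ * (1 + (PowerSeries.X + PowerSeries.C (β d)) * PowerSeries.C c)
      = φ * PowerSeries.C (1 + β d * c) + (φ * PowerSeries.X) * PowerSeries.C c := by
    rw [map_add, map_one, map_mul]
    ring
  rw [expand, map_add, PowerSeries.coeff_mul_C, PowerSeries.coeff_mul_C]
  congr 1
  cases q with
  | zero => rw [PowerSeries.coeff_zero_mul_X, if_pos rfl, zero_mul]
  | succ q => rw [PowerSeries.coeff_succ_mul_X, if_neg (Nat.succ_ne_zero q), Nat.add_sub_cancel]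

/-- degree bound for the product of `k` linear factors. -/
theorem P_coeff_zero (d : ℕ) : ∀ (k : ℕ) (q : ℕ), k < q →
    PowerSeries.coeff q
      (∏ ℓ ∈ Finset.range k,
        (1 + (PowerSeries.X + PowerSeries.C (β d)) * PowerSeries.C (b d ℓ))) = 0 := by
  intro k
  induction k with
  | zero =>
    intro q hq
    rw [Finset.range_zero, Finset.prod_empty, PowerSeries.coeff_one, if_neg (by omega)]
  | succ k ih =>
    intro q hq
    rw [Finset.prod_range_succ, coeff_mul_linfactor, ih q (by omega), zero_mul, zero_add,
      if_neg (by omega), ih (q - 1) (by omega), zero_mul]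

theorem fb_from_P (d : ℕ) (y : R d) : ∀ k : ℕ,
    ∑ q ∈ Finset.range (k + 1),
        PowerSeries.coeff q
            (∏ ℓ ∈ Finset.range k,
              (1 + (PowerSeries.X + PowerSeries.C (β d)) * PowerSeries.C (b d ℓ)))
          * y ^ (k - q)
      = fb d y k := by
  intro k
  induction k with
  | zero => simp [fb]
  | succ k ih =>
    rw [Finset.prod_range_succ]
    have step : ∀ q ∈ Finset.range (k + 2),
        PowerSeries.coeff q
            ((∏ ℓ ∈ Finset.range k,
              (1 + (PowerSeries.X + PowerSeries.C (β d)) * PowerSeries.C (b d ℓ)))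
              * (1 + (PowerSeries.X + PowerSeries.C (β d)) * PowerSeries.C (b d k)))
            * y ^ (k + 1 - q)
          = PowerSeries.coeff q
              (∏ ℓ ∈ Finset.range k,
                (1 + (PowerSeries.X + PowerSeries.C (β d)) * PowerSeries.C (b d ℓ)))
              * (1 + β d * b d k) * y ^ (k + 1 - q)
            + (if q = 0 then 0 else
                PowerSeries.coeff (q - 1)
                  (∏ ℓ ∈ Finset.range k,
                    (1 + (PowerSeries.X + PowerSeries.C (β d))
                      * PowerSeries.C (b d ℓ)))
                  * b d k * y ^ (k + 1 - q)) := by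
      intro q _
      rw [coeff_mul_linfactor, add_mul]
      congr 1
      split_ifs
      · rw [zero_mul]
      · rfl
    rw [Finset.sum_congr rfl step, Finset.sum_add_distrib]
    have hA : ∑ q ∈ Finset.range (k + 2),
        PowerSeries.coeff q
            (∏ ℓ ∈ Finset.range k,
              (1 + (PowerSeries.X + PowerSeries.C (β d)) * PowerSeries.C (b d ℓ)))
            * (1 + β d * b d k) * y ^ (k + 1 - q)
        = (fb d y k * y) * (1 + β d * b d k) := by
      rw [Finset.sum_range_succ, P_coeff_zero d k (k + 1) (by omega), zero_mul, zero_mul,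
        add_zero, ← ih, Finset.sum_mul, Finset.sum_mul]
      apply Finset.sum_congr rfl
      intro q hq
      rw [Finset.mem_range] at hq
      have : k + 1 - q = (k - q) + 1 := by omega
      rw [this, pow_succ]
      ring
    have hB : ∑ q ∈ Finset.range (k + 2),
        (if q = 0 then 0 else
          PowerSeries.coeff (q - 1)
            (∏ ℓ ∈ Finset.range k,
              (1 + (PowerSeries.X + PowerSeries.C (β d)) * PowerSeries.C (b d ℓ)))
            * b d k * y ^ (k + 1 - q))
        = fb d y k * b d k := by
      rw [Finset.sum_range_succ', if_pos rfl, add_zero, ← ih, Finset.sum_mul]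
      apply Finset.sum_congr rfl
      intro q hq
      rw [if_neg (Nat.succ_ne_zero q), Nat.succ_sub_one]
      have : k + 1 - (q + 1) = k - q := by omega
      rw [this]
      ring
    have hfb : fb d y (k + 1) = fb d y k * oplus d y (b d k) := by
      rw [fb, Finset.prod_range_succ]; rfl
    rw [hA, hB, hfb, oplus]
    ring


/-! ### pext and the main coefficient step -/

noncomputable def pext (d : ℕ) (ψ : PowerSeries (R d)) (t : ℤ) : R d :=
  if 0 ≤ t then PowerSeries.coeff t.toNat ψ else 0

theorem Fcoeff_eq_pext (d k : ℕ) : Fcoeff d k = pext d (F d k) := rfl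

theorem coeff_mul_pext (d : ℕ) (φ ψ : PowerSeries (R d)) (D N : ℕ)
    (hφ : ∀ c, D ≤ c → PowerSeries.coeff c φ = 0) :
    PowerSeries.coeff N (φ * ψ)
      = ∑ c ∈ Finset.range D, PowerSeries.coeff c φ * pext d ψ ((N : ℤ) - c) := by
  rw [PowerSeries.coeff_mul, Finset.Nat.sum_antidiagonal_eq_sum_range_succ_mk]
  have h1 : ∀ c ∈ Finset.range (N + 1),
      PowerSeries.coeff c φ * PowerSeries.coeff (N - c) ψ
        = PowerSeries.coeff c φ * pext d ψ ((N : ℤ) - c) := by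
    intro c hc
    rw [Finset.mem_range] at hc
    rw [pext, if_pos (by omega)]
    have ht : ((N : ℤ) - c).toNat = N - c := by omega
    rw [ht]
  rw [Finset.sum_congr rfl h1]
  have h2 : ∀ (L : ℕ), N + 1 ≤ L → D ≤ L →
      ∑ c ∈ Finset.range L, PowerSeries.coeff c φ * pext d ψ ((N : ℤ) - c)
        = ∑ c ∈ Finset.range (N + 1), PowerSeries.coeff c φ * pext d ψ ((N : ℤ) - c) := by
    intro L hL _
    symm
    apply Finset.sum_subset (Finset.range_subset_range.2 hL)
    intro c _ hc
    rw [Finset.mem_range, not_lt] at hc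
    rw [pext, if_neg (by omega), mul_zero]
  have h3 : ∀ (L : ℕ), N + 1 ≤ L → D ≤ L →
      ∑ c ∈ Finset.range L, PowerSeries.coeff c φ * pext d ψ ((N : ℤ) - c)
        = ∑ c ∈ Finset.range D, PowerSeries.coeff c φ * pext d ψ ((N : ℤ) - c) := by
    intro L _ hD
    symm
    apply Finset.sum_subset (Finset.range_subset_range.2 hD)
    intro c _ hc
    rw [Finset.mem_range, not_lt] at hc
    rw [hφ c hc, zero_mul]
  rw [← h2 (max (N + 1) D) (le_max_left _ _) (le_max_right _ _),
    h3 (max (N + 1) D) (le_max_left _ _) (le_max_right _ _)]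

theorem main_step (d : ℕ) (w : ℤ) (k D : ℕ) (φQ ψ : PowerSeries (R d))
    (hφ : ∀ c, D ≤ c → PowerSeries.coeff c φQ = 0) :
    ∑ c ∈ Finset.range D, PowerSeries.coeff c φQ *
        seriesSum d (fun r => Ring.choose w r • (β d ^ r * pext d ψ ((k : ℤ) - c + r)))
      = seriesSum d (fun r => Ring.choose w r • (β d ^ r * pext d (φQ * ψ) ((k : ℤ) + r))) := by
  have h1 : ∀ r : ℕ, pext d (φQ * ψ) ((k : ℤ) + r)
      = ∑ c ∈ Finset.range D,
          PowerSeries.coeff c φQ * pext d ψ ((k : ℤ) - c + r) := by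
    intro r
    rw [pext, if_pos (by positivity)]
    have ht : ((k : ℤ) + r).toNat = k + r := by omega
    rw [ht, coeff_mul_pext d φQ ψ D (k + r) hφ]
    apply Finset.sum_congr rfl
    intro c _
    congr 2
    push_cast
    ring
  have key : ∀ r : ℕ,
      Ring.choose w r • (β d ^ r * pext d (φQ * ψ) ((k : ℤ) + r))
        = ∑ c ∈ Finset.range D, PowerSeries.coeff c φQ *
            (Ring.choose w r • (β d ^ r * pext d ψ ((k : ℤ) - c + r))) := by
    intro r
    rw [h1 r, Finset.mul_sum, Finset.smul_sum]
    apply Finset.sum_congr rfl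
    intro c _
    rw [mul_left_comm, mul_smul_comm]
  rw [seriesSum_congr d key, seriesSum_finsetSum]
  apply Finset.sum_congr rfl
  intro c _
  rw [← mul_seriesSum d _ (van_beta_pow_mul d _ _)]

/-! ### expansion of the product `∏ (1 - u * g i)` -/

theorem prod_one_sub {A : Type*} [CommRing A] {ι : Type*} [DecidableEq ι]
    (S : Finset ι) (g : ι → A) (u : A) :
    ∏ i ∈ S, (1 - u * g i)
      = ∑ p ∈ Finset.range (S.card + 1),
          (-1 : A) ^ p * (∑ t ∈ S.powersetCard p, ∏ i ∈ t, g i) * u ^ p := by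
  have h1 : ∀ i ∈ S, 1 - u * g i = (-u) * g i + 1 := by intro i _; ring
  rw [Finset.prod_congr rfl h1, Finset.prod_add]
  simp only [Finset.prod_const_one, mul_one]
  rw [Finset.sum_powerset]
  apply Finset.sum_congr rfl
  intro p _
  rw [Finset.mul_sum, Finset.sum_mul]
  apply Finset.sum_congr rfl
  intro t ht
  rw [Finset.mem_powersetCard] at ht
  rw [Finset.prod_mul_distrib, Finset.prod_const, ht.2, neg_pow]
  ring

theorem coeff_X_add_C_pow (d : ℕ) (p c : ℕ) :
    PowerSeries.coeff c ((PowerSeries.X + PowerSeries.C (β d)) ^ p)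
      = if c ≤ p then (Nat.choose p c) • β d ^ (p - c) else 0 := by
  rw [add_pow, map_sum]
  have h1 : ∀ q ∈ Finset.range (p + 1),
      PowerSeries.coeff c
          (PowerSeries.X ^ q * PowerSeries.C (β d) ^ (p - q) * (Nat.choose p q : PowerSeries (R d)))
        = if c = q then (Nat.choose p q) • β d ^ (p - q) else 0 := by
    intro q _
    rw [← map_pow, ← map_natCast (PowerSeries.C) (Nat.choose p q), mul_assoc, ← map_mul,
      PowerSeries.coeff_mul_C, PowerSeries.coeff_X_pow]
    split_ifs
    · rw [one_mul, nsmul_eq_mul, mul_comm]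
    · rw [zero_mul]
  rw [Finset.sum_congr rfl h1]
  by_cases hc : c ≤ p
  · rw [Finset.sum_eq_single c]
    · rw [if_pos rfl, if_pos hc]
    · intro q _ hq
      rw [if_neg (fun h => hq h.symm)]
    · intro h
      exact absurd (Finset.mem_range.2 (by omega)) h
  · rw [if_neg hc, Finset.sum_eq_zero]
    intro q hq
    rw [Finset.mem_range] at hq
    rw [if_neg (by omega)]

/-! ### the binomial series for `(1+βx)⁻ⁿ` -/

theorem one_add_step (d : ℕ) (j : Fin d) (m : ℤ) :
    (1 + β d * x d j) *
        seriesSum d (fun r => Ring.choose (m - 1) r • (β d * x d j) ^ r)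
      = seriesSum d (fun r => Ring.choose m r • (β d * x d j) ^ r) := by
  set c' : ℕ → ℤ := fun s => if s = 0 then 0 else Ring.choose (m - 1) (s - 1) with hc'
  have hshift : seriesSum d (fun r => β d * x d j * (Ring.choose (m - 1) r • (β d * x d j) ^ r))
      = seriesSum d (fun s => c' s • (β d * x d j) ^ s) := by
    rw [seriesSum_shift d (f := fun s => c' s • (β d * x d j) ^ s)
      (by rw [hc']; simp) (van_betax_pow d j c')]
    apply seriesSum_congr
    intro r
    rw [hc']
    simp only [Nat.succ_ne_zero, if_false, Nat.add_sub_cancel]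
    rw [mul_smul_comm, ← pow_succ']
  rw [add_mul, one_mul, mul_seriesSum d _ (van_betax_pow d j _), hshift, ← seriesSum_add]
  apply seriesSum_congr
  intro s
  rw [hc']
  cases s with
  | zero =>
    simp [hc', Ring.choose_zero_right]
  | succ s =>
    simp only [Nat.succ_ne_zero, if_false, Nat.add_sub_cancel]
    rw [← add_smul]
    congr 1
    have pas := Ring.choose_succ_succ (m - 1) s
    rw [sub_add_cancel] at pas
    rw [pas]
    ring

theorem seriesSum_choose_zero (d : ℕ) (j : Fin d) :
    seriesSum d (fun r => Ring.choose (0 : ℤ) r • (β d * x d j) ^ r) = 1 := by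
  rw [seriesSum_eq_finsetSum d (van_betax_pow d j _) 1]
  · rw [Finset.sum_range_one, pow_zero, Ring.choose_zero_right, one_smul]
  · intro s hs
    rw [Ring.choose_zero_pos ℤ (by omega), zero_smul]

theorem one_add_pow_mul_seriesSum (d : ℕ) (j : Fin d) : ∀ n : ℕ,
    (1 + β d * x d j) ^ n *
        seriesSum d (fun r => Ring.choose (-(n : ℤ)) r • (β d * x d j) ^ r) = 1 := by
  intro n
  induction n with
  | zero => simpa using seriesSum_choose_zero d j
  | succ n ih =>
    have hm : (-(n + 1 : ℕ) : ℤ) = (-(n : ℤ)) - 1 := by push_cast; ring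
    rw [pow_succ, mul_assoc, hm, one_add_step d j (-(n : ℤ)), ih]

theorem invOneAdd_mul_one_add (d : ℕ) (j : Fin d) :
    invOneAdd d j * (1 + β d * x d j) = 1 := by
  rw [mul_comm]; exact one_add_mul_invOneAdd d j

theorem seriesSum_choose_neg_eq (d : ℕ) (j : Fin d) (n : ℕ) :
    seriesSum d (fun r => Ring.choose (-(n : ℤ)) r • (β d * x d j) ^ r)
      = invOneAdd d j ^ n := by
  have h := one_add_pow_mul_seriesSum d j n
  have h2 : invOneAdd d j ^ n * (1 + β d * x d j) ^ n = 1 := by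
    rw [← mul_pow, invOneAdd_mul_one_add, one_pow]
  calc seriesSum d (fun r => Ring.choose (-(n : ℤ)) r • (β d * x d j) ^ r)
      = (invOneAdd d j ^ n * (1 + β d * x d j) ^ n) *
          seriesSum d (fun r => Ring.choose (-(n : ℤ)) r • (β d * x d j) ^ r) := by
        rw [h2, one_mul]
    _ = invOneAdd d j ^ n := by rw [mul_assoc, h, mul_one]

theorem one_add_pow_mul_invOneAdd_pow (d : ℕ) (j : Fin d) (m n : ℕ) :
    (1 + β d * x d j) ^ m * invOneAdd d j ^ (m + n) = invOneAdd d j ^ n := by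
  rw [pow_add, ← mul_assoc, ← mul_pow, one_add_mul_invOneAdd, one_pow, one_mul]


/-! ### the operator `TT` -/

/-- `TT d k w N` is the coefficient of `u^N` in `(1+βu⁻¹)^w F^{(k)}(u)`. -/
noncomputable def TT (d k : ℕ) (w : ℤ) (N : ℤ) : R d :=
  seriesSum d (fun r => Ring.choose w r • (β d ^ r * Fcoeff d k (N + r)))

/-- merging the `H'`-layer sum with the `G`-layer sum. -/
theorem Hentry_eq (d k : ℕ) (ci : ℤ) (N : ℤ) :
    seriesSum d (fun s => Ring.choose ci s • (β d ^ s * G d k (N + s)))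
      = TT d k (ci - 1) N := by
  have hG : ∀ s : ℕ, Ring.choose ci s • (β d ^ s * G d k (N + s))
      = Ring.choose ci s •
          (β d ^ s * seriesSum d (fun r =>
            ((-1 : ℤ) ^ r) • (β d ^ r * (fun u : ℕ => Fcoeff d k (N + u)) (s + r)))) := by
    intro s
    congr 1
    congr 1
    rw [G]
    apply seriesSum_congr
    intro r
    have h1 : (-β d) ^ r * Fcoeff d k (N + ↑s + ↑r)
        = ((-1 : ℤ) ^ r) • (β d ^ r * Fcoeff d k (N + ↑s + ↑r)) := by
      rw [zsmul_eq_mul]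
      push_cast
      rw [neg_pow]
      ring
    rw [h1]
    have h2 : N + (s : ℤ) + (r : ℤ) = N + ((s + r : ℕ) : ℤ) := by push_cast; ring
    rw [h2]
  rw [seriesSum_congr d hG,
    seriesSum_merge d (fun s => Ring.choose ci s) (fun r => (-1 : ℤ) ^ r)
      (fun u : ℕ => Fcoeff d k (N + u))]
  rw [TT]
  apply seriesSum_congr
  intro t
  rw [conv_alt ci t]

/-- expanding `TT (w+p)` in terms of `TT w`. -/
theorem TT_expand (d k : ℕ) (w : ℤ) (p : ℕ) (N : ℤ) :
    TT d k (w + p) N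
      = ∑ s ∈ Finset.range (p + 1), (Nat.choose p s : ℤ) •
          (β d ^ s * TT d k w (N + s)) := by
  have hfin : seriesSum d (fun s => (Nat.choose p s : ℤ) • (β d ^ s * TT d k w (N + s)))
      = ∑ s ∈ Finset.range (p + 1), (Nat.choose p s : ℤ) • (β d ^ s * TT d k w (N + s)) := by
    apply seriesSum_eq_finsetSum d (van_beta_pow_mul d _ _)
    intro s hs
    rw [Nat.choose_eq_zero_of_lt (by omega), Nat.cast_zero, zero_smul]
  rw [← hfin]
  have hinner : ∀ s : ℕ, (Nat.choose p s : ℤ) • (β d ^ s * TT d k w (N + s))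
      = (Nat.choose p s : ℤ) •
          (β d ^ s * seriesSum d (fun r =>
            Ring.choose w r • (β d ^ r * (fun u : ℕ => Fcoeff d k (N + u)) (s + r)))) := by
    intro s
    congr 1
    congr 1
    rw [TT]
    apply seriesSum_congr
    intro r
    have h2 : N + (s : ℤ) + (r : ℤ) = N + ((s + r : ℕ) : ℤ) := by push_cast; ring
    rw [h2]
  rw [seriesSum_congr d hinner,
    seriesSum_merge d (fun s => (Nat.choose p s : ℤ)) (fun r => Ring.choose w r)
      (fun u : ℕ => Fcoeff d k (N + u))]
  rw [TT]
  apply seriesSum_congr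
  intro t
  rw [conv_vand w p t]

theorem triangle_swap' {A : Type*} [AddCommMonoid A] (M : ℕ) (h : ℕ → ℕ → A) :
    ∑ p ∈ Finset.range (M + 1), ∑ s ∈ Finset.range (p + 1), h p s
      = ∑ c ∈ Finset.range (M + 1), ∑ r ∈ Finset.range (M - c + 1), h (c + r) r := by
  rw [triangle_swap M (fun c r => h (c + r) r)]
  apply Finset.sum_congr rfl
  intro p hp
  rw [← Finset.sum_range_reflect (fun s => h p s) (p + 1)]
  apply Finset.sum_congr rfl
  intro s hs
  rw [Finset.mem_range] at hs
  have h1 : p + 1 - 1 - s = p - s := by omega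
  rw [h1]
  have h2 : s + (p - s) = p := by omega
  rw [h2]

/-! ### the polynomial `QS` and its coefficients -/

noncomputable def QS (d : ℕ) (j : Fin d) : PowerSeries (R d) :=
  ∏ i' ∈ Finset.univ \ {j},
    (1 - (PowerSeries.X + PowerSeries.C (β d)) * PowerSeries.C (xbar d i'))

theorem card_univ_sdiff (d : ℕ) (j : Fin d) :
    (Finset.univ \ {j} : Finset (Fin d)).card = d - 1 := by
  rw [Finset.card_sdiff_of_subset (Finset.singleton_subset_iff.2 (Finset.mem_univ j)),
    Finset.card_singleton, Finset.card_univ, Fintype.card_fin]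

theorem QS_mul_F' (d k : ℕ) (j : Fin d) :
    QS d j * F d k
      = PowerSeries.C (1 + β d * x d j) * (PowerSeries.mk fun n => x d j ^ n) *
          ∏ ℓ ∈ Finset.range k,
            (1 + (PowerSeries.X + PowerSeries.C (β d)) * PowerSeries.C (b d ℓ)) := by
  rw [QS]
  exact QS_mul_F d k j

theorem coeff_QS (d : ℕ) (j : Fin d) (c : ℕ) :
    PowerSeries.coeff c (QS d j)
      = ∑ p ∈ Finset.range ((d - 1) + 1),
          ((-1 : R d) ^ p * esym d (Finset.univ \ {j}) p (xbar d)) *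
            (if c ≤ p then (Nat.choose p c) • β d ^ (p - c) else 0) := by
  rw [QS, prod_one_sub, card_univ_sdiff, map_sum]
  apply Finset.sum_congr rfl
  intro p _
  have hC : ((-1 : PowerSeries (R d)) ^ p *
        (∑ t ∈ (Finset.univ \ {j}).powersetCard p, ∏ i' ∈ t, PowerSeries.C (xbar d i')))
      = PowerSeries.C ((-1 : R d) ^ p * esym d (Finset.univ \ {j}) p (xbar d)) := by
    rw [map_mul, map_pow, map_neg, map_one, esym, map_sum]
    congr 1
    apply Finset.sum_congr rfl
    intro t _
    exact (map_prod _ _ _).symm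
  rw [hC, PowerSeries.coeff_C_mul, coeff_X_add_C_pow]

theorem pext_geom (d k : ℕ) (j : Fin d) (r : ℕ) :
    pext d (PowerSeries.C (1 + β d * x d j) * (PowerSeries.mk fun n => x d j ^ n) *
        ∏ ℓ ∈ Finset.range k,
          (1 + (PowerSeries.X + PowerSeries.C (β d)) * PowerSeries.C (b d ℓ)))
      ((k : ℤ) + r)
      = (1 + β d * x d j) * (x d j ^ r * fb d (x d j) k) := by
  rw [pext, if_pos (by positivity)]
  have ht : ((k : ℤ) + r).toNat = k + r := by omega
  rw [ht, mul_assoc, PowerSeries.coeff_C_mul]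
  congr 1
  rw [mul_comm (PowerSeries.mk fun n => x d j ^ n), PowerSeries.coeff_mul,
    Finset.Nat.sum_antidiagonal_eq_sum_range_succ_mk]
  have hsub : ∑ q ∈ Finset.range (k + r + 1),
      PowerSeries.coeff q
          (∏ ℓ ∈ Finset.range k,
            (1 + (PowerSeries.X + PowerSeries.C (β d)) * PowerSeries.C (b d ℓ)))
        * PowerSeries.coeff (k + r - q) (PowerSeries.mk fun n => x d j ^ n)
      = ∑ q ∈ Finset.range (k + 1),
          PowerSeries.coeff q
              (∏ ℓ ∈ Finset.range k,
                (1 + (PowerSeries.X + PowerSeries.C (β d)) * PowerSeries.C (b d ℓ)))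
            * PowerSeries.coeff (k + r - q) (PowerSeries.mk fun n => x d j ^ n) := by
    symm
    apply Finset.sum_subset (Finset.range_subset_range.2 (by omega))
    intro q hq hq'
    rw [Finset.mem_range, not_lt] at hq'
    rw [P_coeff_zero d k q (by omega), zero_mul]
  rw [hsub]
  rw [← fb_from_P d (x d j) k, Finset.mul_sum]
  apply Finset.sum_congr rfl
  intro q hq
  rw [Finset.mem_range] at hq
  rw [PowerSeries.coeff_mk]
  have hpow : k + r - q = (k - q) + r := by omega
  rw [hpow, pow_add]
  ring

theorem coeff_QS_zero (d : ℕ) (j : Fin d) (c : ℕ) (hc : d ≤ c) :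
    PowerSeries.coeff c (QS d j) = 0 := by
  have hj := j.pos
  rw [coeff_QS, Finset.sum_eq_zero]
  intro p hp
  rw [Finset.mem_range] at hp
  rw [if_neg (by omega), mul_zero]

/-- The key entry computation. -/
theorem entry_eq (d : ℕ) (aa : ℤ) (i j : Fin d) (k : ℕ)
    (hk : (k : ℤ) = aa + d - ((i : ℕ) + 1)) :
    (∑ m : Fin d,
      (seriesSum d fun s =>
        Ring.choose (((i : ℕ) : ℤ) - ((m : ℕ) : ℤ)) s •
          (β d ^ s * G d k (aa + ((m : ℕ) : ℤ) - ((i : ℕ) : ℤ) + s))) *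
      ((-1 : R d) ^ (d - 1 - (m : ℕ)) * esym d (Finset.univ \ {j}) (d - 1 - (m : ℕ)) (xbar d)))
      = invOneAdd d j ^ (d - 1) * (fb d (x d j) k * (1 + β d * x d j) ^ (i : ℕ)) := by
  obtain ⟨M, rfl⟩ : ∃ M, d = M + 1 := ⟨d - 1, by have := i.pos; omega⟩
  simp only [Nat.add_sub_cancel]
  set w : ℤ := ((i : ℕ) : ℤ) - ((M : ℤ) + 1) with hw
  have hiM : (i : ℕ) ≤ M := by have := i.isLt; omega
  have stepA : ∀ m : Fin (M + 1),
      (seriesSum (M + 1) fun s =>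
        Ring.choose (((i : ℕ) : ℤ) - ((m : ℕ) : ℤ)) s •
          (β (M + 1) ^ s * G (M + 1) k (aa + ((m : ℕ) : ℤ) - ((i : ℕ) : ℤ) + s)))
        = TT (M + 1) k (w + ((M - (m : ℕ) : ℕ) : ℤ)) ((k : ℤ) - ((M - (m : ℕ) : ℕ) : ℤ)) := by
    intro m
    have hm : (m : ℕ) ≤ M := by have := m.isLt; omega
    have harg : (fun s : ℕ =>
        Ring.choose (((i : ℕ) : ℤ) - ((m : ℕ) : ℤ)) s •
          (β (M + 1) ^ s * G (M + 1) k (aa + ((m : ℕ) : ℤ) - ((i : ℕ) : ℤ) + s)))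
        = (fun s : ℕ =>
        Ring.choose (((i : ℕ) : ℤ) - ((m : ℕ) : ℤ)) s •
          (β (M + 1) ^ s * G (M + 1) k (((k : ℤ) - ((M - (m : ℕ) : ℕ) : ℤ)) + s))) := by
      funext s
      have h5 : aa + ((m : ℕ) : ℤ) - ((i : ℕ) : ℤ) = (k : ℤ) - ((M - (m : ℕ) : ℕ) : ℤ) := by
        omega
      rw [h5]
    rw [harg, Hentry_eq]
    have h6 : ((i : ℕ) : ℤ) - ((m : ℕ) : ℤ) - 1 = w + ((M - (m : ℕ) : ℕ) : ℤ) := by omega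
    rw [h6]
  have hsum1 : (∑ m : Fin (M + 1),
      (seriesSum (M + 1) fun s =>
        Ring.choose (((i : ℕ) : ℤ) - ((m : ℕ) : ℤ)) s •
          (β (M + 1) ^ s * G (M + 1) k (aa + ((m : ℕ) : ℤ) - ((i : ℕ) : ℤ) + s))) *
      ((-1 : R (M + 1)) ^ (M - (m : ℕ)) *
        esym (M + 1) (Finset.univ \ {j}) (M - (m : ℕ)) (xbar (M + 1))))
      = ∑ m : Fin (M + 1),
          TT (M + 1) k (w + ((M - (m : ℕ) : ℕ) : ℤ)) ((k : ℤ) - ((M - (m : ℕ) : ℕ) : ℤ)) *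
          ((-1 : R (M + 1)) ^ (M - (m : ℕ)) *
            esym (M + 1) (Finset.univ \ {j}) (M - (m : ℕ)) (xbar (M + 1))) :=
    Finset.sum_congr rfl (fun m _ => by rw [stepA m])
  rw [hsum1]
  rw [Fin.sum_univ_eq_sum_range (fun mn =>
    TT (M + 1) k (w + ((M - mn : ℕ) : ℤ)) ((k : ℤ) - ((M - mn : ℕ) : ℤ)) *
      ((-1 : R (M + 1)) ^ (M - mn) *
        esym (M + 1) (Finset.univ \ {j}) (M - mn) (xbar (M + 1)))) (M + 1)]
  rw [← Finset.sum_range_reflect]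
  simp only [Nat.add_sub_cancel]
  have hsum2 : ∀ p ∈ Finset.range (M + 1),
      TT (M + 1) k (w + ((M - (M - p) : ℕ) : ℤ)) ((k : ℤ) - ((M - (M - p) : ℕ) : ℤ)) *
        ((-1 : R (M + 1)) ^ (M - (M - p)) *
          esym (M + 1) (Finset.univ \ {j}) (M - (M - p)) (xbar (M + 1)))
        = ∑ s ∈ Finset.range (p + 1),
            ((Nat.choose p s : ℤ) •
              (β (M + 1) ^ s * TT (M + 1) k w (((k : ℤ) - ((p : ℕ) : ℤ)) + s))) *
            ((-1 : R (M + 1)) ^ p *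
              esym (M + 1) (Finset.univ \ {j}) p (xbar (M + 1))) := by
    intro p hp
    rw [Finset.mem_range] at hp
    have h1 : M - (M - p) = p := by omega
    rw [h1, TT_expand (M + 1) k w p ((k : ℤ) - ((p : ℕ) : ℤ)), Finset.sum_mul]
  rw [Finset.sum_congr rfl hsum2]
  rw [triangle_swap' M (fun p s =>
    ((Nat.choose p s : ℤ) •
      (β (M + 1) ^ s * TT (M + 1) k w (((k : ℤ) - ((p : ℕ) : ℤ)) + s))) *
    ((-1 : R (M + 1)) ^ p * esym (M + 1) (Finset.univ \ {j}) p (xbar (M + 1))))]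
  have hWc : ∀ c ∈ Finset.range (M + 1),
      (∑ r ∈ Finset.range (M - c + 1),
        ((Nat.choose (c + r) r : ℤ) •
          (β (M + 1) ^ r * TT (M + 1) k w (((k : ℤ) - ((c + r : ℕ) : ℤ)) + r))) *
        ((-1 : R (M + 1)) ^ (c + r) *
          esym (M + 1) (Finset.univ \ {j}) (c + r) (xbar (M + 1))))
        = PowerSeries.coeff c (QS (M + 1) j) *
            TT (M + 1) k w ((k : ℤ) - ((c : ℕ) : ℤ)) := by
    intro c hc
    rw [Finset.mem_range] at hc
    have hsplit : PowerSeries.coeff c (QS (M + 1) j) *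
          TT (M + 1) k w ((k : ℤ) - ((c : ℕ) : ℤ))
        = ∑ r ∈ Finset.range (M - c + 1),
            (((-1 : R (M + 1)) ^ (c + r) *
                esym (M + 1) (Finset.univ \ {j}) (c + r) (xbar (M + 1))) *
              (if c ≤ c + r then (Nat.choose (c + r) c) • β (M + 1) ^ (c + r - c) else 0)) *
              TT (M + 1) k w ((k : ℤ) - ((c : ℕ) : ℤ)) := by
      rw [coeff_QS]
      simp only [Nat.add_sub_cancel]
      rw [Finset.sum_mul, Finset.range_eq_Ico,
        ← Finset.sum_Ico_consecutive _ (Nat.zero_le c) (by omega : c ≤ M + 1)]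
      have hzero : ∑ p ∈ Finset.Ico 0 c,
          (((-1 : R (M + 1)) ^ p * esym (M + 1) (Finset.univ \ {j}) p (xbar (M + 1))) *
            (if c ≤ p then (Nat.choose p c) • β (M + 1) ^ (p - c) else 0)) *
            TT (M + 1) k w ((k : ℤ) - ((c : ℕ) : ℤ)) = 0 := by
        apply Finset.sum_eq_zero
        intro p hp
        rw [Finset.mem_Ico] at hp
        rw [if_neg (by omega), mul_zero, zero_mul]
      rw [hzero, zero_add, Finset.sum_Ico_eq_sum_range]
      rw [show M + 1 - c = M - c + 1 by omega, Finset.range_eq_Ico]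
    rw [hsplit]
    apply Finset.sum_congr rfl
    intro r hr
    rw [Finset.mem_range] at hr
    rw [if_pos (by omega : c ≤ c + r)]
    have harg : (k : ℤ) - ((c + r : ℕ) : ℤ) + (r : ℤ) = (k : ℤ) - ((c : ℕ) : ℤ) := by
      push_cast; ring
    rw [harg]
    have hch : Nat.choose (c + r) r = Nat.choose (c + r) c := by
      have := Nat.choose_symm (by omega : c ≤ c + r)
      rw [show c + r - c = r by omega] at this
      exact this
    rw [show c + r - c = r by omega, zsmul_eq_mul, nsmul_eq_mul, hch]
    push_cast
    ring
  rw [Finset.sum_congr rfl hWc]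
  simp only [TT, Fcoeff_eq_pext]
  rw [main_step (M + 1) w k (M + 1) (QS (M + 1) j) (F (M + 1) k)
    (fun c hc => coeff_QS_zero (M + 1) j c hc)]
  simp only [QS_mul_F']
  rw [seriesSum_congr (M + 1) (fun r => by rw [pext_geom (M + 1) k j r])]
  have hrearr : ∀ r : ℕ,
      Ring.choose w r •
          (β (M + 1) ^ r *
            ((1 + β (M + 1) * x (M + 1) j) * (x (M + 1) j ^ r * fb (M + 1) (x (M + 1) j) k)))
        = ((1 + β (M + 1) * x (M + 1) j) * fb (M + 1) (x (M + 1) j) k) *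
            (Ring.choose w r • (β (M + 1) * x (M + 1) j) ^ r) := by
    intro r
    rw [mul_smul_comm]
    congr 1
    rw [mul_pow]
    ring
  rw [seriesSum_congr _ hrearr, ← mul_seriesSum _ _ (van_betax_pow (M + 1) j _)]
  have hw2 : w = -(((M + 1 - (i : ℕ) : ℕ)) : ℤ) := by omega
  rw [hw2, seriesSum_choose_neg_eq (M + 1) j (M + 1 - (i : ℕ))]
  have e1 : M + 1 - (i : ℕ) = 1 + (M - (i : ℕ)) := by omega
  have e2 : (i : ℕ) + (M - (i : ℕ)) = M := by omega
  have h3 : (1 + β (M + 1) * x (M + 1) j) * fb (M + 1) (x (M + 1) j) k *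
      invOneAdd (M + 1) j ^ (1 + (M - (i : ℕ)))
      = fb (M + 1) (x (M + 1) j) k * invOneAdd (M + 1) j ^ (M - (i : ℕ)) := by
    calc (1 + β (M + 1) * x (M + 1) j) * fb (M + 1) (x (M + 1) j) k *
        invOneAdd (M + 1) j ^ (1 + (M - (i : ℕ)))
        = fb (M + 1) (x (M + 1) j) k *
            ((1 + β (M + 1) * x (M + 1) j) ^ 1 * invOneAdd (M + 1) j ^ (1 + (M - (i : ℕ)))) := by
          rw [pow_one]; ring
      _ = fb (M + 1) (x (M + 1) j) k * invOneAdd (M + 1) j ^ (M - (i : ℕ)) := by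
          rw [one_add_pow_mul_invOneAdd_pow]
  have h4 : invOneAdd (M + 1) j ^ M *
      (fb (M + 1) (x (M + 1) j) k * (1 + β (M + 1) * x (M + 1) j) ^ (i : ℕ))
      = fb (M + 1) (x (M + 1) j) k * invOneAdd (M + 1) j ^ (M - (i : ℕ)) := by
    calc invOneAdd (M + 1) j ^ M *
        (fb (M + 1) (x (M + 1) j) k * (1 + β (M + 1) * x (M + 1) j) ^ (i : ℕ))
        = fb (M + 1) (x (M + 1) j) k *
            ((1 + β (M + 1) * x (M + 1) j) ^ (i : ℕ) *
              invOneAdd (M + 1) j ^ ((i : ℕ) + (M - (i : ℕ)))) := by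
          rw [e2]; ring
      _ = fb (M + 1) (x (M + 1) j) k * invOneAdd (M + 1) j ^ (M - (i : ℕ)) := by
          rw [one_add_pow_mul_invOneAdd_pow]
  rw [e1, h3, h4]

/-- `det H' · det M̄ = (∏_j (1+βx_j)^{1-d}) ·` (the bi-alternant determinant). -/
theorem detH'_mul_detMbar
    (d : ℕ) (a : Fin d → ℤ) (ha : ∀ i : Fin d, 0 ≤ a i + d - ((i : ℕ) + 1)) :
    Matrix.det (Matrix.of fun i j : Fin d =>
        seriesSum d fun s =>
          Ring.choose (((i : ℕ) : ℤ) - ((j : ℕ) : ℤ)) s •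
            (β d ^ s * G d (a i + d - ((i : ℕ) + 1)).toNat (a i + (j : ℕ) - (i : ℕ) + s))) *
      Matrix.det (Matrix.of fun i j : Fin d =>
        (-1 : R d) ^ (d - 1 - (i : ℕ)) *
          esym d (Finset.univ \ {j}) (d - 1 - (i : ℕ)) (xbar d))
      = (∏ j : Fin d, invOneAdd d j ^ (d - 1)) *
          Matrix.det (Matrix.of fun i j : Fin d =>
            fb d (x d j) (a i + d - ((i : ℕ) + 1)).toNat *
              (1 + β d * x d j) ^ (i : ℕ)) := by
  rcases Nat.eq_zero_or_pos d with hd | hd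
  · subst hd
    simp [Matrix.det_isEmpty]
  · rw [← Matrix.det_mul]
    have hmat : (Matrix.of fun i j : Fin d =>
        seriesSum d fun s =>
          Ring.choose (((i : ℕ) : ℤ) - ((j : ℕ) : ℤ)) s •
            (β d ^ s * G d (a i + d - ((i : ℕ) + 1)).toNat (a i + (j : ℕ) - (i : ℕ) + s))) *
      (Matrix.of fun i j : Fin d =>
        (-1 : R d) ^ (d - 1 - (i : ℕ)) *
          esym d (Finset.univ \ {j}) (d - 1 - (i : ℕ)) (xbar d))
        = Matrix.of (fun i j : Fin d =>
            (fun j' : Fin d => invOneAdd d j' ^ (d - 1)) j *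
              (Matrix.of fun i' j' : Fin d =>
                fb d (x d j') (a i' + d - ((i' : ℕ) + 1)).toNat *
                  (1 + β d * x d j') ^ (i' : ℕ)) i j) := by
      refine Matrix.ext (fun i j => ?_)
      rw [Matrix.mul_apply]
      simp only [Matrix.of_apply]
      exact entry_eq d (a i) i j (a i + d - ((i : ℕ) + 1)).toNat
        (by rw [Int.toNat_of_nonneg (ha i)])
    rw [hmat, Matrix.det_mul_row]
end GrothDet
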